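/- Finite-dimensional bounded-real lemma (Theorem 1), time-domain form: Let A ∈ ℝ^{n×n}, B ∈ ℝ^{n×m}, C ∈ ℝ^{q×n}, D ∈ ℝ^{q×m} and γ > 0. Suppose there exists a symmetric positive definite matrix P ∈ ℝ^{n×n} such that the symmetric block matrix [[AᵀP + PA, PB, Cᵀ], [BᵀP, −γI_m, Dᵀ], [C, D, −γI_q]] is negative semidefinite. Let w : [0,∞) → ℝ^m be continuous with t ↦ |w(t)|² integrable on [0,∞), let x : [0,∞) → ℝⁿ be continuously differentiable with x(0) = 0 and x'(t) = Ax(t) + Bw(t) for all t ≥ 0, and set y(t) := Cx(t) + Dw(t); assume t ↦ |y(t)|² is integrable on [0,∞). Then ∫₀^∞ |y(t)|² dt ≤ γ² ∫₀^∞ |w(t)|² dt. -/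

import Mathlib

open Matrix MeasureTheory

noncomputable section

lemma dot_tr' {a b : ℕ} (M : Matrix (Fin a) (Fin b) ℝ) (u : Fin a → ℝ) (v : Fin b → ℝ) :
    v ⬝ᵥ (Mᵀ *ᵥ u) = (M *ᵥ v) ⬝ᵥ u := by
  rw [Matrix.mulVec_transpose, dotProduct_comm (M *ᵥ v) u, Matrix.dotProduct_mulVec]
  exact dotProduct_comm _ _

lemma quad_form' (n m q : ℕ)
    (A : Matrix (Fin n) (Fin n) ℝ) (B : Matrix (Fin n) (Fin m) ℝ)
    (C : Matrix (Fin q) (Fin n) ℝ) (D : Matrix (Fin q) (Fin m) ℝ)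
    (γ : ℝ) (P : Matrix (Fin n) (Fin n) ℝ) (ξ : Fin n → ℝ) (η : Fin m → ℝ) :
    (Sum.elim ξ (Sum.elim η (γ⁻¹ • (C *ᵥ ξ + D *ᵥ η)))) ⬝ᵥ ((Matrix.fromBlocks
          (Aᵀ * P + P * A)
          (Matrix.fromCols (P * B) Cᵀ)
          (Matrix.fromRows (Bᵀ * P) C)
          (Matrix.fromBlocks
            (-γ • (1 : Matrix (Fin m) (Fin m) ℝ)) Dᵀ
            D (-γ • (1 : Matrix (Fin q) (Fin q) ℝ)))) *ᵥ
        (Sum.elim ξ (Sum.elim η (γ⁻¹ • (C *ᵥ ξ + D *ᵥ η)))))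
    = ((A *ᵥ ξ + B *ᵥ η) ⬝ᵥ (P *ᵥ ξ) + ξ ⬝ᵥ (P *ᵥ (A *ᵥ ξ + B *ᵥ η)))
      + (2 * γ⁻¹ - γ * γ⁻¹ * γ⁻¹) * ((C *ᵥ ξ + D *ᵥ η) ⬝ᵥ (C *ᵥ ξ + D *ᵥ η))
      - γ * (η ⬝ᵥ η) := by
  simp only [Matrix.fromBlocks_mulVec, Sum.elim_comp_inl, Sum.elim_comp_inr,
    Matrix.fromCols_mulVec_sumElim, Matrix.fromRows_mulVec,
    sumElim_dotProduct_sumElim, Matrix.add_mulVec, dotProduct_add,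
    add_dotProduct, ← Matrix.mulVec_mulVec, Matrix.smul_mulVec,
    Matrix.one_mulVec, dotProduct_smul, smul_dotProduct, smul_eq_mul,
    Matrix.mulVec_smul, dot_tr', neg_smul, Matrix.neg_mulVec, dotProduct_neg,
    neg_dotProduct, Matrix.mulVec_add]
  rw [dotProduct_comm (D *ᵥ η) (C *ᵥ ξ)]
  ring

theorem bounded_real_lemma_time_domain
    (n m q : ℕ)
    (A : Matrix (Fin n) (Fin n) ℝ) (B : Matrix (Fin n) (Fin m) ℝ)
    (C : Matrix (Fin q) (Fin n) ℝ) (D : Matrix (Fin q) (Fin m) ℝ)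
    (γ : ℝ) (hγ : 0 < γ)
    (P : Matrix (Fin n) (Fin n) ℝ) (hP : P.PosDef)
    (hLMI : ∀ ζ : Fin n ⊕ (Fin m ⊕ Fin q) → ℝ,
      ζ ⬝ᵥ ((Matrix.fromBlocks
          (Aᵀ * P + P * A)
          (Matrix.fromCols (P * B) Cᵀ)
          (Matrix.fromRows (Bᵀ * P) C)
          (Matrix.fromBlocks
            (-γ • (1 : Matrix (Fin m) (Fin m) ℝ)) Dᵀ
            D (-γ • (1 : Matrix (Fin q) (Fin q) ℝ)))) *ᵥ ζ) ≤ 0)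
    (w : ℝ → Fin m → ℝ) (hw : Continuous w)
    (hwint : IntegrableOn (fun t => w t ⬝ᵥ w t) (Set.Ioi (0:ℝ)))
    (x : ℝ → Fin n → ℝ) (hx0 : x 0 = 0)
    (hx : ∀ t : ℝ, 0 ≤ t →
      HasDerivWithinAt x (A *ᵥ x t + B *ᵥ w t) (Set.Ici (0:ℝ)) t)
    (y : ℝ → Fin q → ℝ)
    (hy : ∀ t : ℝ, 0 ≤ t → y t = C *ᵥ x t + D *ᵥ w t)
    (hyint : IntegrableOn (fun t => y t ⬝ᵥ y t) (Set.Ioi (0:ℝ))) :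
    ∫ t in Set.Ioi (0:ℝ), y t ⬝ᵥ y t ≤ γ^2 * ∫ t in Set.Ioi (0:ℝ), w t ⬝ᵥ w t := by
  -- notation
  set x' : ℝ → Fin n → ℝ := fun t => A *ᵥ x t + B *ᵥ w t with hx'def
  set y' : ℝ → Fin q → ℝ := fun t => C *ᵥ x t + D *ᵥ w t with hy'def
  set V : ℝ → ℝ := fun t => x t ⬝ᵥ (P *ᵥ x t) with hVdef
  set dV : ℝ → ℝ := fun t => x' t ⬝ᵥ (P *ᵥ x t) + x t ⬝ᵥ (P *ᵥ x' t) with hdVdef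
  set g : ℝ → ℝ := fun t => γ * (w t ⬝ᵥ w t) - γ⁻¹ * (y' t ⬝ᵥ y' t) with hgdef
  -- pointwise key inequality
  have hkey : ∀ t : ℝ, dV t ≤ g t := by
    intro t
    have h := hLMI (Sum.elim (x t) (Sum.elim (w t) (γ⁻¹ • (C *ᵥ x t + D *ᵥ w t))))
    rw [quad_form'] at h
    have hγγ : γ * γ⁻¹ * γ⁻¹ = γ⁻¹ := by field_simp
    rw [hγγ] at h
    simp only [hdVdef, hgdef, hx'def, hy'def]
    nlinarith [h]
  -- continuity of x on Ici 0
  have hxc : ContinuousOn x (Set.Ici (0:ℝ)) := fun t ht => (hx t ht).continuousWithinAt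
  have hx'c : ContinuousOn x' (Set.Ici (0:ℝ)) := by
    apply ContinuousOn.add
    · exact (continuous_const.matrix_mulVec continuous_id).comp_continuousOn hxc
    · exact ((continuous_const.matrix_mulVec continuous_id).comp hw).continuousOn
  have hy'c : ContinuousOn y' (Set.Ici (0:ℝ)) := by
    apply ContinuousOn.add
    · exact (continuous_const.matrix_mulVec continuous_id).comp_continuousOn hxc
    · exact ((continuous_const.matrix_mulVec continuous_id).comp hw).continuousOn
  have hdotc : ∀ {k : ℕ} (f g' : ℝ → Fin k → ℝ), ContinuousOn f (Set.Ici (0:ℝ)) →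
      ContinuousOn g' (Set.Ici (0:ℝ)) →
      ContinuousOn (fun t => f t ⬝ᵥ g' t) (Set.Ici (0:ℝ)) := by
    intro k f g' hf hg'
    exact (Continuous.dotProduct (continuous_fst) (continuous_snd)).comp_continuousOn
      (hf.prodMk hg')
  have hdVc : ContinuousOn dV (Set.Ici (0:ℝ)) :=
    (hdotc _ _ hx'c ((continuous_const.matrix_mulVec continuous_id).comp_continuousOn hxc)).add
      (hdotc _ _ hxc ((continuous_const.matrix_mulVec continuous_id).comp_continuousOn hx'c))
  have hgc : ContinuousOn g (Set.Ici (0:ℝ)) :=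
    ((continuous_const.mul (hw.dotProduct hw)).continuousOn).sub
      (continuousOn_const.mul (hdotc _ _ hy'c hy'c))
  -- derivative of V
  have hV : ∀ t : ℝ, 0 ≤ t → HasDerivWithinAt V (dV t) (Set.Ici (0:ℝ)) t := by
    intro t ht
    have hxi : ∀ i, HasDerivWithinAt (fun s => x s i) (x' t i) (Set.Ici (0:ℝ)) t :=
      fun i => hasDerivWithinAt_pi.mp (hx t ht) i
    have hPxi : ∀ i, HasDerivWithinAt (fun s => ∑ j, P i j * x s j)
        (∑ j, P i j * x' t j) (Set.Ici (0:ℝ)) t :=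
      fun i => HasDerivWithinAt.fun_sum (fun j _ => (hxi j).const_mul (P i j))
    have hsum : HasDerivWithinAt (fun s => ∑ i, x s i * ∑ j, P i j * x s j)
        (∑ i, (x' t i * ∑ j, P i j * x t j + x t i * ∑ j, P i j * x' t j))
        (Set.Ici (0:ℝ)) t :=
      HasDerivWithinAt.fun_sum (fun i _ => (hxi i).mul (hPxi i))
    have e1 : V = fun s => ∑ i, x s i * ∑ j, P i j * x s j := by
      funext s; simp [hVdef, dotProduct, Matrix.mulVec]
    have e2 : dV t = ∑ i, (x' t i * ∑ j, P i j * x t j + x t i * ∑ j, P i j * x' t j) := by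
      simp [hdVdef, dotProduct, Matrix.mulVec, Finset.sum_add_distrib]
    rw [e1, e2]
    exact hsum
  -- nonnegativity facts
  have hwnn : ∀ t : ℝ, 0 ≤ w t ⬝ᵥ w t :=
    fun t => Finset.sum_nonneg fun i _ => mul_self_nonneg _
  have hy'nn : ∀ t : ℝ, 0 ≤ y' t ⬝ᵥ y' t :=
    fun t => Finset.sum_nonneg fun i _ => mul_self_nonneg _
  have hynn : ∀ t : ℝ, 0 ≤ y t ⬝ᵥ y t :=
    fun t => Finset.sum_nonneg fun i _ => mul_self_nonneg _
  have hVnn : ∀ t : ℝ, 0 ≤ V t := by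
    intro t
    have := hP.posSemidef.dotProduct_mulVec_nonneg (x t)
    simpa [hVdef] using this
  have hV0 : V 0 = 0 := by simp [hVdef, hx0]
  -- the truncated inequality
  have hIw : ∀ T : ℝ, 0 ≤ T →
      ∫ s in (0:ℝ)..T, w s ⬝ᵥ w s ≤ ∫ t in Set.Ioi (0:ℝ), w t ⬝ᵥ w t := by
    intro T hT
    rw [intervalIntegral.integral_of_le hT]
    apply setIntegral_mono_set hwint
    · exact Filter.Eventually.of_forall fun t => hwnn t
    · exact HasSubset.Subset.eventuallyLE Set.Ioc_subset_Ioi_self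
  have htrunc : ∀ T : ℝ, 0 ≤ T →
      ∫ s in (0:ℝ)..T, y' s ⬝ᵥ y' s ≤ γ^2 * ∫ t in Set.Ioi (0:ℝ), w t ⬝ᵥ w t := by
    intro T hT
    have hIccIci : Set.Icc (0:ℝ) T ⊆ Set.Ici (0:ℝ) := fun u hu => hu.1
    have hVcont : ContinuousOn V (Set.Icc (0:ℝ) T) :=
      fun s hs => ((hV s hs.1).continuousWithinAt).mono hIccIci
    have hdVint : IntervalIntegrable dV volume 0 T :=
      (hdVc.mono hIccIci).intervalIntegrable_of_Icc hT
    have hgint : IntervalIntegrable g volume 0 T :=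
      (hgc.mono hIccIci).intervalIntegrable_of_Icc hT
    have hftc : ∫ s in (0:ℝ)..T, dV s = V T - V 0 := by
      apply intervalIntegral.integral_eq_sub_of_hasDeriv_right_of_le hT hVcont _ hdVint
      intro s hs
      exact (hV s hs.1.le).mono fun u hu => (hs.1.trans hu).le
    have hmono : ∫ s in (0:ℝ)..T, dV s ≤ ∫ s in (0:ℝ)..T, g s :=
      intervalIntegral.integral_mono_on hT hdVint hgint fun s _ => hkey s
    have hwint' : IntervalIntegrable (fun s => w s ⬝ᵥ w s) volume 0 T :=
      ((hw.dotProduct hw).continuousOn).intervalIntegrable_of_Icc hT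
    have hy'int : IntervalIntegrable (fun s => y' s ⬝ᵥ y' s) volume 0 T :=
      ((hdotc _ _ hy'c hy'c).mono hIccIci).intervalIntegrable_of_Icc hT
    have hgsplit : ∫ s in (0:ℝ)..T, g s
        = γ * (∫ s in (0:ℝ)..T, w s ⬝ᵥ w s) - γ⁻¹ * (∫ s in (0:ℝ)..T, y' s ⬝ᵥ y' s) := by
      rw [hgdef]
      rw [intervalIntegral.integral_sub (hwint'.const_mul γ) (hy'int.const_mul γ⁻¹),
        intervalIntegral.integral_const_mul, intervalIntegral.integral_const_mul]
    have h1 : γ⁻¹ * (∫ s in (0:ℝ)..T, y' s ⬝ᵥ y' s) ≤ γ * (∫ s in (0:ℝ)..T, w s ⬝ᵥ w s) := by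
      have := hftc ▸ hmono
      rw [hgsplit] at this
      have h0 := hVnn T
      linarith [hV0 ▸ this]
    have h2 : γ * (∫ s in (0:ℝ)..T, w s ⬝ᵥ w s) ≤ γ * ∫ t in Set.Ioi (0:ℝ), w t ⬝ᵥ w t :=
      mul_le_mul_of_nonneg_left (hIw T hT) hγ.le
    have h3 : γ⁻¹ * (∫ s in (0:ℝ)..T, y' s ⬝ᵥ y' s) ≤ γ * ∫ t in Set.Ioi (0:ℝ), w t ⬝ᵥ w t :=
      h1.trans h2
    calc ∫ s in (0:ℝ)..T, y' s ⬝ᵥ y' s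
        = γ * (γ⁻¹ * ∫ s in (0:ℝ)..T, y' s ⬝ᵥ y' s) := by field_simp
      _ ≤ γ * (γ * ∫ t in Set.Ioi (0:ℝ), w t ⬝ᵥ w t) :=
          mul_le_mul_of_nonneg_left h3 hγ.le
      _ = γ^2 * ∫ t in Set.Ioi (0:ℝ), w t ⬝ᵥ w t := by ring
  -- replace y' by y in the truncated integral
  have htrunc' : ∀ T : ℝ, 0 ≤ T →
      ∫ s in (0:ℝ)..T, y s ⬝ᵥ y s ≤ γ^2 * ∫ t in Set.Ioi (0:ℝ), w t ⬝ᵥ w t := by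
    intro T hT
    have : ∫ s in (0:ℝ)..T, y s ⬝ᵥ y s = ∫ s in (0:ℝ)..T, y' s ⬝ᵥ y' s := by
      apply intervalIntegral.integral_congr
      intro s hs
      rw [Set.uIcc_of_le hT] at hs
      show y s ⬝ᵥ y s = y' s ⬝ᵥ y' s
      rw [hy s hs.1]
    rw [this]
    exact htrunc T hT
  -- pass to the limit
  have hlim : Filter.Tendsto (fun T => ∫ s in (0:ℝ)..T, y s ⬝ᵥ y s) Filter.atTop
      (nhds (∫ t in Set.Ioi (0:ℝ), y t ⬝ᵥ y t)) :=
    intervalIntegral_tendsto_integral_Ioi 0 hyint Filter.tendsto_id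
  refine le_of_tendsto hlim ?_
  filter_upwards [Filter.eventually_ge_atTop (0:ℝ)] with T hT
  exact htrunc' T hT
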